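/- Let H be an infinite-dimensional Hilbert space, T : H → H a compact operator, and φ_1, …, φ_J ∈ H finitely many vectors. Then the union ⋃_{j=1}^J {T^n φ_j : n ≥ 0} cannot be a frame for H. -/

import Mathlib

open scoped ComplexInnerProductSpace

/-- A sequence `f` in a Hilbert space is a frame if there exist constants
`A, B > 0` with `A‖x‖² ≤ ∑ᵢ |⟨x, f i⟩|² ≤ B‖x‖²` for all `x`. -/
def IsFrame {ι H : Type*} [NormedAddCommGroup H] [InnerProductSpace ℂ H] (f : ι → H) : Prop :=
  ∃ A B : ℝ, 0 < A ∧ 0 < B ∧ ∀ x : H,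
    A * ‖x‖ ^ 2 ≤ ∑' i, ‖⟪x, f i⟫‖ ^ 2 ∧ ∑' i, ‖⟪x, f i⟫‖ ^ 2 ≤ B * ‖x‖ ^ 2

/-- No-go result for compact operators: if `H` is infinite-dimensional and `T` is compact,
then for any finitely many vectors `φ_1, …, φ_J` the family `⋃ⱼ {T^n φⱼ : n ≥ 0}` is not a
frame for `H`. -/
theorem stmt19 {H : Type*} [NormedAddCommGroup H] [InnerProductSpace ℂ H] [CompleteSpace H]
    (hdim : ¬ FiniteDimensional ℂ H)
    (T : H →L[ℂ] H) (hT : IsCompactOperator ⇑T)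
    (J : ℕ) (φ : Fin J → H) :
    ¬ IsFrame (fun p : Fin J × ℕ => (T ^ p.2) (φ p.1)) := by
  rintro ⟨A, B, hA, hB, hfr⟩
  set Tad : H →L[ℂ] H := ContinuousLinearMap.adjoint T with hTad
  set S : H →L[ℂ] H := T.comp Tad with hSdef
  set K : Submodule ℂ H := Submodule.span ℂ (Set.range φ) with hK
  have hKfin : FiniteDimensional ℂ K := FiniteDimensional.span_of_finite ℂ (Set.finite_range φ)
  -- Kᗮ is infinite dimensional
  have hVinf : ¬ FiniteDimensional ℂ Kᗮ := by
    intro hfin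
    have hsup : K ⊔ Kᗮ = ⊤ := Submodule.sup_orthogonal_of_hasOrthogonalProjection
    have : FiniteDimensional ℂ (K ⊔ Kᗮ : Submodule ℂ H) := Submodule.finiteDimensional_sup K Kᗮ
    rw [hsup] at this
    exact hdim ((Submodule.topEquiv : (⊤ : Submodule ℂ H) ≃ₗ[ℂ] H).finiteDimensional)
  -- key inequality: A‖v‖² ≤ B‖v‖‖S v‖ on Kᗮ
  have key : ∀ v ∈ Kᗮ, A * ‖v‖ ^ 2 ≤ B * (‖v‖ * ‖S v‖) := by
    intro v hv
    have hshift : (∑' p : Fin J × ℕ, ‖⟪v, (T ^ p.2) (φ p.1)⟫‖ ^ 2)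
        = ∑' p : Fin J × ℕ, ‖⟪Tad v, (T ^ p.2) (φ p.1)⟫‖ ^ 2 := by
      have hinj : Function.Injective (fun p : Fin J × ℕ => ((p.1, p.2 + 1) : Fin J × ℕ)) := by
        intro p q h
        simpa [Prod.ext_iff] using h
      have hsupp : Function.support (fun p : Fin J × ℕ => ‖⟪v, (T ^ p.2) (φ p.1)⟫‖ ^ 2)
          ⊆ Set.range (fun p : Fin J × ℕ => ((p.1, p.2 + 1) : Fin J × ℕ)) := by
        intro p hp
        rcases p with ⟨j, n⟩
        cases n with
        | zero =>
          exfalso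
          apply hp
          have h0 : ⟪v, φ j⟫ = 0 :=
            Submodule.inner_left_of_mem_orthogonal
              (Submodule.subset_span (Set.mem_range_self j)) hv
          simp [h0]
        | succ m => exact ⟨(j, m), rfl⟩
      have := hinj.tsum_eq hsupp
      rw [← this]
      congr 1
      ext p
      have hpow : (T ^ (p.2 + 1)) (φ p.1) = T ((T ^ p.2) (φ p.1)) := by
        rw [pow_succ']; rfl
      rw [hpow, ← ContinuousLinearMap.adjoint_inner_left]
    have h1 := (hfr v).1
    rw [hshift] at h1
    have h2 := (hfr (Tad v)).2
    have h3 : A * ‖v‖ ^ 2 ≤ B * ‖Tad v‖ ^ 2 := le_trans h1 h2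
    have h4 : ‖Tad v‖ ^ 2 ≤ ‖v‖ * ‖S v‖ := by
      have : (‖Tad v‖ : ℝ) ^ 2 = RCLike.re ⟪Tad v, Tad v⟫ := (inner_self_eq_norm_sq _).symm
      rw [this]
      have hadj : ⟪Tad v, Tad v⟫ = ⟪v, S v⟫ := by
        rw [ContinuousLinearMap.adjoint_inner_left]; rfl
      rw [hadj]
      exact le_trans (RCLike.re_le_norm _) (norm_inner_le_norm _ _)
    nlinarith [norm_nonneg v, norm_nonneg (S v)]
  -- compactness of S
  have hS : IsCompactOperator ⇑S := by
    have := hT.comp_clm Tad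
    exact this
  -- a separated bounded sequence in Kᗮ
  obtain ⟨R, e, hR, heR, hsep⟩ := exists_seq_norm_le_one_le_norm_sub (𝕜 := ℂ) hVinf
  set u : ℕ → H := fun n => S ((e n : H)) with hu
  -- separation of images
  have husep : ∀ m n : ℕ, m ≠ n → A / B ≤ dist (u m) (u n) := by
    intro m n hmn
    have hwmem : ((e m : H) - (e n : H)) ∈ Kᗮ := by
      exact Kᗮ.sub_mem (e m).2 (e n).2
    set w : H := (e m : H) - (e n : H) with hw
    have hw1 : (1 : ℝ) ≤ ‖w‖ := by
      have := hsep hmn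
      simpa [hw] using this
    have hkey := key w hwmem
    have hAB : A ≤ B * ‖S w‖ := by
      nlinarith [norm_nonneg (S w), norm_nonneg w, hA.le,
        mul_le_mul_of_nonneg_left hw1 hA.le]
    have hdist : dist (u m) (u n) = ‖S w‖ := by
      rw [dist_eq_norm, hu]
      simp only [hw]
      rw [← map_sub]
    rw [hdist]
    rw [div_le_iff₀ hB] at *
    linarith [hAB]
  -- compact set containing the u n
  have hKC : IsCompact (closure (⇑S '' Metric.closedBall 0 R)) := by
    have hS' : IsCompactOperator ⇑(S : H →ₗ[ℂ] H) := by simpa using hS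
    simpa using hS'.isCompact_closure_image_closedBall (𝕜₁ := ℂ) R
  have humem : ∀ n, u n ∈ closure (⇑S '' Metric.closedBall 0 R) := by
    intro n
    apply subset_closure
    exact ⟨(e n : H), by simpa [Metric.mem_closedBall, dist_zero_right] using heR n, rfl⟩
  obtain ⟨x, -, ψ, hψ, hlim⟩ := hKC.isSeqCompact humem
  have hcauchy : CauchySeq (u ∘ ψ) := hlim.cauchySeq
  obtain ⟨N, hN⟩ := Metric.cauchySeq_iff.mp hcauchy (A / B) (div_pos hA hB)
  have hlt := hN N le_rfl (N + 1) (Nat.le_succ N)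
  have hne : ψ N ≠ ψ (N + 1) := (hψ (Nat.lt_succ_self N)).ne
  have := husep (ψ N) (ψ (N + 1)) hne
  have : A / B ≤ dist ((u ∘ ψ) N) ((u ∘ ψ) (N + 1)) := this
  linarith
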